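/- Let A be a finite-dimensional algebra over an algebraically closed field and let d be a positive integer. Then the following are equivalent: (1) there exist infinitely many pairwise non-isomorphic bricks of k-dimension d; (2) there exists an infinite Hom-orthogonal set consisting of bricks of k-dimension d. -/

import Mathlib

universe u v

open Module

/-- A finite-dimensional left module over the `k`-algebra `A`. -/
structure FDMod (k A : Type u) [Field k] [Ring A] [Algebra k A] : Type (u + 1) where
  carrier : Type u
  [addCommGroup : AddCommGroup carrier]
  [moduleK : Module k carrier]
  [moduleA : Module A carrier]
  [tower : IsScalarTower k A carrier]
  [fd : FiniteDimensional k carrier]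

attribute [instance] FDMod.addCommGroup FDMod.moduleK FDMod.moduleA FDMod.tower FDMod.fd

variable {k A : Type u} [Field k] [Ring A] [Algebra k A]

/-- `M` is a brick: `M ≠ 0` and every `A`-endomorphism of `M` is a `k`-scalar,
i.e. `End_A(M) ≅ k`. -/
def FDMod.IsBrick (M : FDMod k A) : Prop :=
  Nontrivial M.carrier ∧ ∀ f : M.carrier →ₗ[A] M.carrier, ∃ c : k, ∀ x : M.carrier, f x = c • x

/-- `M` and `N` are Hom-orthogonal: `Hom_A(M,N) = 0` and `Hom_A(N,M) = 0`. -/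
def FDMod.HomOrth (M N : FDMod k A) : Prop :=
  (∀ f : M.carrier →ₗ[A] N.carrier, f = 0) ∧ (∀ f : N.carrier →ₗ[A] M.carrier, f = 0)

/-- `M` and `N` are isomorphic as `A`-modules. -/
def FDMod.Iso (M N : FDMod k A) : Prop :=
  Nonempty (M.carrier ≃ₗ[A] N.carrier)

/-- A family of modules forms a Hom-orthogonal set: the modules are nonzero,
pairwise non-isomorphic and pairwise Hom-orthogonal. -/
def HomOrthFamily {I : Type v} (X : I → FDMod k A) : Prop :=
  (∀ i, Nontrivial (X i).carrier) ∧
  (∀ i j, i ≠ j → ¬(X i).Iso (X j)) ∧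
  (∀ i j, i ≠ j → (X i).HomOrth (X j))

/-- `A` is brick-finite: there are only finitely many isomorphism classes of bricks. -/
def BrickFinite (k A : Type u) [Field k] [Ring A] [Algebra k A] : Prop :=
  ∃ (m : ℕ) (f : Fin m → FDMod k A), ∀ N : FDMod k A, N.IsBrick → ∃ i, N.Iso (f i)

/-- `A` has rank `n`: there are exactly `n` isomorphism classes of simple modules. -/
def HasRank (k A : Type u) [Field k] [Ring A] [Algebra k A] (n : ℕ) : Prop :=
  ∃ S : Fin n → FDMod k A,
    (∀ i, IsSimpleModule A (S i).carrier) ∧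
    (∀ i j, i ≠ j → ¬(S i).Iso (S j)) ∧
    (∀ T : FDMod k A, IsSimpleModule A T.carrier → ∃ i, T.Iso (S i))

namespace Stmt7Aux

open Matrix

noncomputable section

set_option linter.unusedSectionVars false
variable {k : Type*} [Field k] {d n : ℕ}

/-- index for matrix entries -/
abbrev Idx (d : ℕ) := Fin d × Fin d
/-- variables -/
abbrev Var (n d : ℕ) := Fin n × (Fin d × Fin d)
/-- point space: tuples of matrices -/
abbrev Pt (k : Type*) (n d : ℕ) := Fin n → Matrix (Fin d) (Fin d) k
abbrev MatS (k : Type*) (d : ℕ) := Matrix (Fin d) (Fin d) k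

def vecOf (F : MatS k d) : Idx d → k := fun p => F p.1 p.2
def matOf {α : Type*} (v : Idx d → α) : Matrix (Fin d) (Fin d) α := Matrix.of fun a b => v (a,b)

@[simp] lemma vecOf_matOf (v : Idx d → k) : vecOf (matOf v) = v := by
  funext p; simp [vecOf, matOf]

@[simp] lemma matOf_vecOf (F : MatS k d) : matOf (vecOf F) = F := by
  ext a b; simp [vecOf, matOf]

lemma vecOf_eq_zero_iff (F : MatS k d) : vecOf F = 0 ↔ F = 0 := by
  constructor
  · intro h; ext a b; exact congrFun h (a, b)
  · rintro rfl; funext p; simp [vecOf]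

lemma vecOf_smul (c : k) (F : MatS k d) : vecOf (c • F) = c • vecOf F := by
  funext p; simp [vecOf]

/-- `F` intertwines the tuples `ρ` and `x`. -/
def Itw (ρ x : Pt k n d) (F : MatS k d) : Prop := ∀ i, F * ρ i = x i * F

lemma itw_smul {ρ x : Pt k n d} {F : MatS k d} (c : k) (h : Itw ρ x F) : Itw ρ x (c • F) := by
  intro i; rw [Matrix.smul_mul, Matrix.mul_smul, h i]

/-- The linear system whose kernel (as matrices) is the space of intertwiners. -/
def Lmat (ρ x : Pt k n d) : Matrix (Var n d) (Idx d) k :=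
  Matrix.of fun r c =>
    (if c.1 = r.2.1 then ρ r.1 c.2 r.2.2 else 0) - (if c.2 = r.2.2 then x r.1 r.2.1 c.1 else 0)

lemma lmat_mulVec_apply (ρ x : Pt k n d) (F : MatS k d) (i : Fin n) (a b : Fin d) :
    (Lmat ρ x *ᵥ vecOf F) (i, (a, b)) = (F * ρ i - x i * F) a b := by
  simp only [Matrix.mulVec, dotProduct, Lmat, Matrix.of_apply, vecOf,
    Matrix.sub_apply, Matrix.mul_apply, sub_mul, ite_mul, zero_mul,
    Finset.sum_sub_distrib, Fintype.sum_prod_type]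
  congr 1
  · rw [Finset.sum_comm]
    simp [mul_comm]
  · simp

lemma lmat_ker (ρ x : Pt k n d) (F : MatS k d) :
    Lmat ρ x *ᵥ vecOf F = 0 ↔ Itw ρ x F := by
  constructor
  · intro h i
    have : ∀ a b, (F * ρ i - x i * F) a b = 0 := by
      intro a b; rw [← lmat_mulVec_apply ρ x F i a b, h]; rfl
    apply sub_eq_zero.1
    ext a b; exact this a b
  · intro h
    funext r
    obtain ⟨i, a, b⟩ := r
    rw [lmat_mulVec_apply, h i]
    simp


open MvPolynomial in
/-- polynomial ring for the affine space of points -/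
abbrev PR (k : Type*) [Field k] (n d : ℕ) := MvPolynomial (Var n d) k

def evalA (x : Pt k n d) : PR k n d →+* k := MvPolynomial.eval (fun v => x v.1 v.2.1 v.2.2)

def LR (ρ : Pt k n d) : Matrix (Var n d) (Idx d) (PR k n d) :=
  Matrix.of fun r c =>
    (if c.1 = r.2.1 then MvPolynomial.C (ρ r.1 c.2 r.2.2) else 0)
      - (if c.2 = r.2.2 then MvPolynomial.X (r.1, (r.2.1, c.1)) else 0)

lemma LR_map (ρ x : Pt k n d) : (LR ρ).map (evalA x) = Lmat ρ x := by
  ext r c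
  simp only [Matrix.map_apply, LR, Lmat, Matrix.of_apply, map_sub, evalA,
    apply_ite (MvPolynomial.eval (fun v : Var n d => x v.1 v.2.1 v.2.2)),
    MvPolynomial.eval_C, MvPolynomial.eval_X, map_zero]


section Core

variable (ρ : Pt k n d)

/-- The core polynomial construction associated to a "brick point" `ρ`. -/
theorem core_exists (hd : 0 < d) (hsolo : ∀ F : MatS k d, Itw ρ ρ F → ∃ c : k, F = c • 1) :
    ∃ qB PP : PR k n d,
      evalA ρ PP ≠ 0 ∧
      (∀ (x : Pt k n d) (F : MatS k d), F ≠ 0 → Itw ρ x F → evalA x qB = 0) ∧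
      (∀ x : Pt k n d, evalA x qB = 0 → evalA x PP ≠ 0 →
        (∃ F, F ≠ 0 ∧ Itw ρ x F) → ∃ F, Itw ρ x F ∧ IsUnit F.det) := by
  classical
  -- basic index
  set c0 : Idx d := (⟨0, hd⟩, ⟨0, hd⟩) with hc0def
  set w0 : Idx d → k := vecOf (1 : MatS k d) with hw0def
  have hw0c0 : w0 c0 = 1 := by simp [hw0def, vecOf, Matrix.one_apply, hc0def]
  -- the matrix T
  set T : Matrix (Idx d) (Idx d) k := (1 : Matrix (Idx d) (Idx d) k).updateCol c0 w0 with hTdef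
  have hdetT : T.det = 1 := by
    have := Matrix.cramer_one (n := Idx d) (α := k)
    have h2 : Matrix.cramer (1 : Matrix (Idx d) (Idx d) k) w0 c0 = w0 c0 := by rw [this]; rfl
    rw [Matrix.cramer_apply] at h2
    rw [hTdef, h2, hw0c0]
  have hTunit : IsUnit T.det := by rw [hdetT]; exact isUnit_one
  have hTc0 : T *ᵥ Pi.single c0 1 = w0 := by
    rw [Matrix.mulVec_single_one]
    funext p
    simp [hTdef, Matrix.updateCol_apply]
  have hTj : ∀ j : Idx d, j ≠ c0 → T *ᵥ Pi.single j 1 = Pi.single j 1 := by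
    intro j hj
    rw [Matrix.mulVec_single_one]
    funext p
    simp [hTdef, Matrix.updateCol_apply, hj, Matrix.one_apply, Pi.single_apply]
  have hTTinv : ∀ v : Idx d → k, T *ᵥ (T⁻¹ *ᵥ v) = v := by
    intro v; rw [Matrix.mulVec_mulVec, Matrix.mul_nonsing_inv _ hTunit, Matrix.one_mulVec]
  -- kernel description at ρ
  have hker : ∀ v : Idx d → k, Lmat ρ ρ *ᵥ v = 0 → ∃ c : k, v = c • w0 := by
    intro v hv
    obtain ⟨c, hc⟩ := hsolo (matOf v) ((lmat_ker ρ ρ (matOf v)).1 (by rwa [vecOf_matOf]))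
    refine ⟨c, ?_⟩
    rw [← vecOf_matOf (v := v), hc, vecOf_smul, hw0def]
  have hLw0 : Lmat ρ ρ *ᵥ w0 = 0 := by
    rw [hw0def]
    exact (lmat_ker ρ ρ 1).2 (fun i => by simp)
  -- the independent column family
  set vcol : {j : Idx d // j ≠ c0} → (Var n d → k) :=
    fun j => Lmat ρ ρ *ᵥ Pi.single j.1 1 with hvcoldef
  have hsum : ∀ g : {j : Idx d // j ≠ c0} → k,
      Lmat ρ ρ *ᵥ (∑ j, g j • (Pi.single j.1 1 : Idx d → k)) = ∑ j, g j • vcol j := by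
    intro g
    rw [show ∀ u, Lmat ρ ρ *ᵥ u = (Lmat ρ ρ).mulVecLin u from fun _ => rfl]
    rw [map_sum]
    refine Finset.sum_congr rfl (fun j _ => ?_)
    rw [LinearMap.map_smul]
    rfl
  have hli : LinearIndependent k vcol := by
    rw [Fintype.linearIndependent_iff]
    intro g hg
    set u : Idx d → k := ∑ j, g j • (Pi.single j.1 1 : Idx d → k) with hu
    have hLu : Lmat ρ ρ *ᵥ u = 0 := by rw [hu, hsum, hg]
    obtain ⟨c, hc⟩ := hker u hLu
    have huc0 : u c0 = 0 := by
      rw [hu]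
      rw [Finset.sum_apply]
      refine Finset.sum_eq_zero (fun j _ => ?_)
      have h0 : (Pi.single j.1 1 : Idx d → k) c0 = 0 := by
        rw [Pi.single_apply, if_neg]
        intro h; exact j.2 h.symm
      simp [h0]
    have hcz : c = 0 := by
      have := congrFun hc c0
      rw [huc0] at this
      simpa [hw0c0] using this.symm
    intro j
    have hu0 : u = 0 := by rw [hc, hcz, zero_smul]
    have := congrFun hu0 j.1
    rw [hu] at this
    rw [Finset.sum_apply] at this
    rw [Finset.sum_eq_single j] at this
    · simpa using this
    · intro j' _ hne
      have h0 : (Pi.single j'.1 1 : Idx d → k) j.1 = 0 := by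
        rw [Pi.single_apply, if_neg]
        intro h
        exact hne (Subtype.ext h.symm)
      simp [h0]
    · intro h; exact absurd (Finset.mem_univ j) h
  -- the projection ψ
  set W := Submodule.span k (Set.range vcol) with hWdef
  obtain ⟨W', hW'⟩ := Submodule.exists_isCompl W
  set π := Submodule.linearProjOfIsCompl W W' hW' with hπdef
  set bW := Basis.span hli with hbWdef
  set φ : W →ₗ[k] (Idx d → k) := bW.constr k (fun j => Pi.single j.1 (1:k)) with hφdef
  set ψ : (Var n d → k) →ₗ[k] (Idx d → k) := φ ∘ₗ π with hψdef
  have hψv : ∀ j, ψ (vcol j) = Pi.single j.1 1 := by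
    intro j
    have hmem : vcol j ∈ W := Submodule.subset_span ⟨j, rfl⟩
    have h1 : π (vcol j) = ⟨vcol j, hmem⟩ :=
      Submodule.linearProjOfIsCompl_apply_left hW' ⟨vcol j, hmem⟩
    have h2 : (⟨vcol j, hmem⟩ : W) = bW j := by
      apply Subtype.ext
      rw [hbWdef, Basis.span_apply]
    rw [hψdef, LinearMap.comp_apply, h1, h2, hφdef, Basis.constr_basis]
  set S : Matrix (Idx d) (Var n d) k := Matrix.of (fun p q => ψ (Pi.single q 1) p) with hSdef
  have hSmv : ∀ y, S *ᵥ y = ψ y := by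
    intro y
    have hy : y = ∑ q, y q • (Pi.single q 1 : Var n d → k) := by
      funext j
      rw [Finset.sum_apply, Finset.sum_eq_single j]
      · simp
      · intro q _ hq
        simp [Pi.single_apply, Ne.symm hq]
      · intro h; exact absurd (Finset.mem_univ j) h
    funext p
    have h1 : (S *ᵥ y) p = ∑ q, ψ (Pi.single q 1) p * y q := by
      simp [Matrix.mulVec, dotProduct, hSdef]
    rw [h1]
    conv_rhs => rw [hy]
    rw [map_sum, Finset.sum_apply]
    refine Finset.sum_congr rfl (fun q _ => ?_)
    rw [LinearMap.map_smul]
    simp [mul_comm]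
  -- the normal form J
  set J : Matrix (Idx d) (Idx d) k := Matrix.diagonal (fun p => if p = c0 then 0 else 1) with hJdef
  have hSLT : S * Lmat ρ ρ * T = J := by
    ext p j
    have h1 : (S * Lmat ρ ρ * T) p j = ((S * Lmat ρ ρ * T) *ᵥ Pi.single j 1) p := by
      rw [Matrix.mulVec_single]; simp
    have h2 : J p j = (J *ᵥ Pi.single j 1) p := by
      rw [Matrix.mulVec_single]; simp
    rw [h1, h2]
    suffices hcol : (S * Lmat ρ ρ * T) *ᵥ Pi.single j 1 = J *ᵥ Pi.single j 1 by rw [hcol]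
    rw [← Matrix.mulVec_mulVec, ← Matrix.mulVec_mulVec]
    by_cases hj : j = c0
    · subst hj
      rw [hTc0, hLw0, Matrix.mulVec_zero]
      rw [Matrix.mulVec_single]
      funext p'
      simp only [Matrix.diagonal_apply, hJdef, Pi.zero_apply]
      by_cases hp : p' = c0 <;> simp [hp]
    · rw [hTj j hj]
      have : Lmat ρ ρ *ᵥ Pi.single j 1 = vcol ⟨j, hj⟩ := rfl
      rw [this, hSmv, hψv]
      rw [Matrix.mulVec_single]
      funext p'
      rw [Pi.single_apply]
      simp only [hJdef, Matrix.diagonal_apply]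
      by_cases hp : p' = j
      · subst hp; simp [hj]
      · simp [hp, Ne.symm hp]
  -- polynomial matrices
  set CRm : Matrix (Idx d) (Idx d) (PR k n d) :=
    (S.map MvPolynomial.C : Matrix (Idx d) (Var n d) (PR k n d)) * LR ρ * (T.map MvPolynomial.C) with hCRmdef
  have hmapS : ∀ x : Pt k n d, (S.map (MvPolynomial.C : k →+* PR k n d)).map (evalA x) = S := by
    intro x; ext p q; simp [Matrix.map_apply, evalA]
  have hmapT : ∀ x : Pt k n d, (T.map (MvPolynomial.C : k →+* PR k n d)).map (evalA x) = T := by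
    intro x; ext p q; simp [Matrix.map_apply, evalA]
  have hCx : ∀ x : Pt k n d, CRm.map (evalA x) = S * Lmat ρ x * T := by
    intro x
    rw [hCRmdef, Matrix.map_mul, Matrix.map_mul, hmapS, hmapT, LR_map]
  set vR : Idx d → PR k n d := fun p => CRm.adjugate p c0 with hvRdef
  set uR : Idx d → PR k n d := (T.map MvPolynomial.C) *ᵥ vR with huRdef
  have hqBx : ∀ x : Pt k n d, evalA x CRm.det = (S * Lmat ρ x * T).det := by
    intro x
    rw [RingHom.map_det]
    rw [RingHom.mapMatrix_apply, hCx]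
  have hadjx : ∀ x : Pt k n d, (CRm.adjugate).map (evalA x) = (S * Lmat ρ x * T).adjugate := by
    intro x
    have h := (evalA x).map_adjugate CRm
    rw [RingHom.mapMatrix_apply, RingHom.mapMatrix_apply] at h
    rw [h, hCx]
  have huRx : ∀ x : Pt k n d,
      (fun p => evalA x (uR p)) = T *ᵥ (fun p => (S * Lmat ρ x * T).adjugate p c0) := by
    intro x
    funext p
    rw [huRdef]
    simp only [Matrix.mulVec, dotProduct]
    rw [map_sum]
    refine Finset.sum_congr rfl (fun q _ => ?_)
    rw [_root_.map_mul]
    congr 1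
    · simp [Matrix.map_apply, evalA]
    · have h1 : evalA x (vR q) = ((CRm.adjugate).map (evalA x)) q c0 := rfl
      rw [h1, hadjx]
  have hPPx : ∀ x : Pt k n d,
      evalA x (matOf uR).det
        = (matOf (T *ᵥ (fun p => (S * Lmat ρ x * T).adjugate p c0))).det := by
    intro x
    rw [RingHom.map_det, RingHom.mapMatrix_apply]
    congr 1
    ext a b
    have h1 : ((matOf uR).map (evalA x)) a b = evalA x (uR (a, b)) := rfl
    rw [h1]
    exact congrFun (huRx x) (a, b)
  refine ⟨CRm.det, (matOf uR).det, ?_, ?_, ?_⟩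
  · -- P does not vanish at ρ
    rw [hPPx ρ, hSLT]
    have hadjJ : (fun p => J.adjugate p c0) = (Pi.single c0 1 : Idx d → k) := by
      funext p
      rw [hJdef, Matrix.adjugate_diagonal]
      by_cases hp : p = c0
      · subst hp
        rw [Matrix.diagonal_apply_eq, Pi.single_eq_same]
        refine Finset.prod_eq_one (fun j hj => ?_)
        rw [if_neg (Finset.ne_of_mem_erase hj)]
      · rw [Matrix.diagonal_apply_ne _ hp, Pi.single_eq_of_ne hp]
    rw [hadjJ, hTc0]
    have hmw : matOf w0 = (1 : MatS k d) := by rw [hw0def, matOf_vecOf]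
    rw [hmw, Matrix.det_one]
    exact one_ne_zero
  · -- vanishing of qB
    intro x F hF hitw
    by_contra hdet
    rw [hqBx x] at hdet
    have hCunit : IsUnit (S * Lmat ρ x * T).det := isUnit_iff_ne_zero.2 hdet
    have h0 : (S * Lmat ρ x * T) *ᵥ (T⁻¹ *ᵥ vecOf F) = 0 := by
      rw [Matrix.mulVec_mulVec, Matrix.mul_assoc (S * Lmat ρ x) T T⁻¹,
        Matrix.mul_nonsing_inv _ hTunit, Matrix.mul_one, ← Matrix.mulVec_mulVec,
        (lmat_ker ρ x F).2 hitw, Matrix.mulVec_zero]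
    have h1 : T⁻¹ *ᵥ vecOf F = 0 := by
      have h2 := congrArg (fun v => (S * Lmat ρ x * T)⁻¹ *ᵥ v) h0
      simp only [Matrix.mulVec_mulVec, Matrix.mulVec_zero] at h2
      rw [← Matrix.mul_assoc, Matrix.nonsing_inv_mul _ hCunit, Matrix.one_mul] at h2
      exact h2
    have h3 : vecOf F = 0 := by rw [← hTTinv (vecOf F), h1, Matrix.mulVec_zero]
    exact hF ((vecOf_eq_zero_iff F).1 h3)
  · -- production of an invertible intertwiner
    intro x hq hP hex
    obtain ⟨F0, hF0, hF0itw⟩ := hex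
    rw [hqBx x] at hq
    rw [hPPx x] at hP
    set Cx := S * Lmat ρ x * T with hCxdef
    set vx : Idx d → k := fun p => Cx.adjugate p c0 with hvxdef
    set ux : Idx d → k := T *ᵥ vx with huxdef
    have hCv : Cx *ᵥ vx = 0 := by
      have h1 : Cx * Cx.adjugate = 0 := by
        rw [Matrix.mul_adjugate, hq, zero_smul]
      have h2 := congrArg (fun M => M *ᵥ (Pi.single c0 1 : Idx d → k)) h1
      simp only [← Matrix.mulVec_mulVec, Matrix.zero_mulVec] at h2
      rw [Matrix.mulVec_single_one] at h2
      have h3 : Cx.adjugate.col c0 = vx := by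
        funext i; rw [hvxdef]; rfl
      rw [h3] at h2
      exact h2
    set w' : Idx d → k := T⁻¹ *ᵥ vecOf F0 with hw'def
    have hCw' : Cx *ᵥ w' = 0 := by
      rw [hw'def, Matrix.mulVec_mulVec, hCxdef, Matrix.mul_assoc (S * Lmat ρ x) T T⁻¹,
        Matrix.mul_nonsing_inv _ hTunit, Matrix.mul_one, ← Matrix.mulVec_mulVec,
        (lmat_ker ρ x F0).2 hF0itw, Matrix.mulVec_zero]
    have hTw' : T *ᵥ w' = vecOf F0 := hTTinv _
    have hvxne : vx ≠ 0 := by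
      intro h0
      apply hP
      have hux0 : ux = 0 := by rw [huxdef, h0, Matrix.mulVec_zero]
      rw [hux0]
      have hm0 : matOf (0 : Idx d → k) = (0 : MatS k d) := by ext a b; rfl
      rw [hm0]
      haveI : Nonempty (Fin d) := ⟨⟨0, hd⟩⟩
      exact Matrix.det_zero
    obtain ⟨i, hvxi⟩ : ∃ i, vx i ≠ 0 := by
      by_contra hno
      push_neg at hno
      exact hvxne (funext hno)
    have hupd : IsUnit (Cx.updateRow c0 (Pi.single i 1)).det := by
      apply isUnit_iff_ne_zero.2
      rw [← Matrix.adjugate_apply]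
      exact hvxi
    set z : Idx d → k := (w' i) • vx - (vx i) • w' with hzdef
    have hz1 : Cx *ᵥ z = 0 := by
      rw [hzdef, Matrix.mulVec_sub, Matrix.mulVec_smul, Matrix.mulVec_smul, hCv, hCw']
      simp
    have hz2 : z i = 0 := by
      simp only [hzdef, Pi.sub_apply, Pi.smul_apply, smul_eq_mul]
      ring
    have hMz : (Cx.updateRow c0 (Pi.single i 1)) *ᵥ z = 0 := by
      funext r
      by_cases hr : r = c0
      · subst hr
        show (Cx.updateRow c0 (Pi.single i 1)) c0 ⬝ᵥ z = 0
        rw [Matrix.updateRow_self, single_dotProduct, hz2, mul_zero]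
      · show (Cx.updateRow c0 (Pi.single i 1)) r ⬝ᵥ z = 0
        rw [Matrix.updateRow_ne hr]
        exact congrFun hz1 r
    have hz0 : z = 0 := by
      have h2 := congrArg (fun v => (Cx.updateRow c0 (Pi.single i 1))⁻¹ *ᵥ v) hMz
      simpa [Matrix.mulVec_mulVec, Matrix.nonsing_inv_mul _ hupd, Matrix.one_mulVec,
        Matrix.mulVec_zero] using h2
    have hkey : (w' i) • vx = (vx i) • w' := by
      rw [hzdef] at hz0
      exact sub_eq_zero.1 hz0
    have hw'i : w' i ≠ 0 := by
      intro h0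
      rw [h0, zero_smul] at hkey
      have hw'0 : w' = 0 := by
        rcases smul_eq_zero.1 hkey.symm with h | h
        · exact absurd h hvxi
        · exact h
      apply hF0
      apply (vecOf_eq_zero_iff F0).1
      rw [← hTw', hw'0, Matrix.mulVec_zero]
    have hux : ux = ((w' i)⁻¹ * vx i) • vecOf F0 := by
      have h2 : T *ᵥ ((w' i) • vx) = (vx i) • vecOf F0 := by
        rw [hkey, Matrix.mulVec_smul, hTw']
      have h3 : (w' i) • ux = (vx i) • vecOf F0 := by
        rw [huxdef, ← Matrix.mulVec_smul, h2]
      calc ux = (w' i)⁻¹ • ((w' i) • ux) := by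
            rw [smul_smul, inv_mul_cancel₀ hw'i, one_smul]
        _ = ((w' i)⁻¹ * vx i) • vecOf F0 := by rw [h3, smul_smul]
    refine ⟨matOf ux, ?_, ?_⟩
    · have hm : matOf ux = ((w' i)⁻¹ * vx i) • F0 := by
        rw [hux]
        ext a b
        simp [matOf, vecOf, Matrix.smul_apply, smul_eq_mul]
      rw [hm]
      exact itw_smul _ hF0itw
    · exact isUnit_iff_ne_zero.2 hP

end Core


section Transpose

variable {k : Type*} [Field k] {d n : ℕ}

lemma itw_transpose {ρ x : Pt k n d} {F : MatS k d} (h : Itw ρ x F) :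
    Itw (fun i => (x i)ᵀ) (fun i => (ρ i)ᵀ) Fᵀ := by
  intro i
  have h2 := congrArg Matrix.transpose (h i)
  rw [Matrix.transpose_mul, Matrix.transpose_mul] at h2
  exact h2.symm

lemma solo_transpose {ρ : Pt k n d} (hsolo : ∀ F : MatS k d, Itw ρ ρ F → ∃ c : k, F = c • 1) :
    ∀ F : MatS k d, Itw (fun i => (ρ i)ᵀ) (fun i => (ρ i)ᵀ) F → ∃ c : k, F = c • 1 := by
  intro F h
  have h2 := itw_transpose h
  simp only [Matrix.transpose_transpose] at h2
  obtain ⟨c, hc⟩ := hsolo Fᵀ h2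
  refine ⟨c, ?_⟩
  have h3 := congrArg Matrix.transpose hc
  rwa [Matrix.transpose_transpose, Matrix.transpose_smul, Matrix.transpose_one] at h3

/-- the coordinate swap on variables -/
def swp : Var n d → Var n d := fun v => (v.1, (v.2.2, v.2.1))

lemma evalA_rename (x : Pt k n d) (p : PR k n d) :
    evalA x (MvPolynomial.rename swp p) = evalA (fun i => (x i)ᵀ) p := by
  rw [evalA, evalA, MvPolynomial.eval_rename]
  rfl

end Transpose

section Topo

variable {k : Type*} [Field k] {d n : ℕ}

def zeroSet (Sp : Set (PR k n d)) : Set (Pt k n d) := {x | ∀ p ∈ Sp, evalA x p = 0}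

def PolyClosed (s : Set (Pt k n d)) : Prop := ∃ Sp, s = zeroSet Sp

lemma polyClosed_univ : PolyClosed (Set.univ : Set (Pt k n d)) :=
  ⟨∅, by ext x; simp [zeroSet]⟩

lemma polyClosed_inter {s t : Set (Pt k n d)} (hs : PolyClosed s) (ht : PolyClosed t) :
    PolyClosed (s ∩ t) := by
  obtain ⟨Sp, rfl⟩ := hs
  obtain ⟨Tp, rfl⟩ := ht
  refine ⟨Sp ∪ Tp, ?_⟩
  ext x
  constructor
  · rintro ⟨h1, h2⟩ p hp
    rcases hp with hp | hp
    · exact h1 p hp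
    · exact h2 p hp
  · intro h
    exact ⟨fun p hp => h p (Or.inl hp), fun p hp => h p (Or.inr hp)⟩

lemma polyClosed_single (p : PR k n d) : PolyClosed {x : Pt k n d | evalA x p = 0} :=
  ⟨{p}, by ext x; simp [zeroSet]⟩

def vanishing (s : Set (Pt k n d)) : Ideal (PR k n d) where
  carrier := {p | ∀ x ∈ s, evalA x p = 0}
  add_mem' := fun hp hq x hx => by
    rw [map_add]
    rw [hp x hx, hq x hx, add_zero]
  zero_mem' := fun x _ => map_zero _
  smul_mem' := fun r p hp x hx => by
    rw [smul_eq_mul, _root_.map_mul, hp x hx, mul_zero]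

lemma mem_vanishing {s : Set (Pt k n d)} {p : PR k n d} :
    p ∈ vanishing s ↔ ∀ x ∈ s, evalA x p = 0 := Iff.rfl

lemma zeroSet_vanishing {s : Set (Pt k n d)} (hs : PolyClosed s) :
    zeroSet (vanishing s : Set (PR k n d)) = s := by
  obtain ⟨Sp, rfl⟩ := hs
  apply Set.Subset.antisymm
  · intro x hx p hp
    exact hx p (fun y hy => hy p hp)
  · intro x hx p hp
    exact hp x hx

lemma exists_minimal_polyClosed (Q : Set (Pt k n d) → Prop)
    (h0 : ∃ s, PolyClosed s ∧ Q s) :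
    ∃ Z, PolyClosed Z ∧ Q Z ∧ ∀ s, PolyClosed s → Q s → s ⊆ Z → s = Z := by
  classical
  set Id : Set (Ideal (PR k n d)) :=
    {J : Ideal (PR k n d) | ∃ s, (PolyClosed s ∧ Q s) ∧ vanishing s = J} with hId
  have hIdne : Id.Nonempty := by
    obtain ⟨s, hs⟩ := h0
    exact ⟨vanishing s, s, hs, rfl⟩
  obtain ⟨J, hJId, hJmax⟩ :=
    set_has_maximal_iff_noetherian.mpr (inferInstance : IsNoetherianRing (PR k n d)) Id hIdne
  obtain ⟨Z, ⟨hZc, hZQ⟩, hZJ⟩ := hJId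
  refine ⟨Z, hZc, hZQ, ?_⟩
  intro s hsc hsQ hsub
  have hle : vanishing Z ≤ vanishing s := fun p hp x hx => hp x (hsub hx)
  have heq : vanishing s = vanishing Z := by
    by_contra hne
    have hlt : J < vanishing s := by
      rw [← hZJ]
      exact lt_of_le_of_ne hle (Ne.symm hne)
    exact hJmax (vanishing s) ⟨s, ⟨hsc, hsQ⟩, rfl⟩ hlt
  calc s = zeroSet (vanishing s : Set (PR k n d)) := (zeroSet_vanishing hsc).symm
    _ = zeroSet (vanishing Z : Set (PR k n d)) := by rw [heq]
    _ = Z := zeroSet_vanishing hZc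

end Topo


section Modules

variable {k A : Type u} [Field k] [Ring A] [Algebra k A] [FiniteDimensional k A] {d : ℕ}

/-- scalar action of `a : A` as a `k`-linear endomorphism. -/
def actL (M : FDMod k A) (a : A) : M.carrier →ₗ[k] M.carrier where
  toFun m := a • m
  map_add' := smul_add a
  map_smul' c m := by
    simp only [RingHom.id_apply]
    calc a • (c • m) = a • ((c • (1 : A)) • m) := by rw [smul_assoc, one_smul]
      _ = (a * (c • (1 : A))) • m := smul_smul a _ m
      _ = (c • (a * 1)) • m := by rw [mul_smul_comm]
      _ = (c • a) • m := by rw [mul_one]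
      _ = c • (a • m) := smul_assoc c a m

@[simp] lemma actL_apply (M : FDMod k A) (a : A) (m : M.carrier) : actL M a m = a • m := rfl

/-- the point in the representation space attached to a module with a chosen basis. -/
def ptOf (M : FDMod k A) (b : Basis (Fin d) k M.carrier) : Pt k (finrank k A) d :=
  fun i => LinearMap.toMatrix b b (actL M (Module.finBasis k A i))

lemma alinear_of_comm {M N : FDMod k A} (f : M.carrier →ₗ[k] N.carrier)
    (h : ∀ i : Fin (finrank k A), ∀ m : M.carrier,
      f ((Module.finBasis k A i) • m) = (Module.finBasis k A i) • f m)
    (a : A) (m : M.carrier) : f (a • m) = a • f m := by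
  set bA := Module.finBasis k A with hbA
  rw [← bA.sum_repr a, Finset.sum_smul, Finset.sum_smul, map_sum]
  refine Finset.sum_congr rfl (fun i _ => ?_)
  rw [smul_assoc, smul_assoc, f.map_smul, h i]

lemma itw_of_hom {M N : FDMod k A} (bM : Basis (Fin d) k M.carrier)
    (bN : Basis (Fin d) k N.carrier) (f : M.carrier →ₗ[A] N.carrier) :
    Itw (ptOf M bM) (ptOf N bN) (LinearMap.toMatrix bM bN (f.restrictScalars k)) := by
  intro i
  rw [ptOf, ptOf, ← LinearMap.toMatrix_comp bM bM bN, ← LinearMap.toMatrix_comp bM bN bN]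
  congr 1
  apply LinearMap.ext
  intro m
  simp only [LinearMap.comp_apply, actL_apply, LinearMap.coe_restrictScalars]
  exact f.map_smul _ m

lemma hom_of_itw {M N : FDMod k A} (bM : Basis (Fin d) k M.carrier)
    (bN : Basis (Fin d) k N.carrier) (F : MatS k d)
    (hitw : Itw (ptOf M bM) (ptOf N bN) F) :
    ∃ g : M.carrier →ₗ[A] N.carrier, ∀ m, g m = Matrix.toLin bM bN F m := by
  have hcomm : ∀ i, (Matrix.toLin bM bN F) ∘ₗ (actL M (Module.finBasis k A i))
      = (actL N (Module.finBasis k A i)) ∘ₗ (Matrix.toLin bM bN F) := by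
    intro i
    have h1 : Matrix.toLin bM bN (F * (ptOf M bM i))
        = Matrix.toLin bM bN F ∘ₗ Matrix.toLin bM bM (ptOf M bM i) := Matrix.toLin_mul bM bM bN F _
    have h2 : Matrix.toLin bM bN ((ptOf N bN i) * F)
        = Matrix.toLin bN bN (ptOf N bN i) ∘ₗ Matrix.toLin bM bN F := Matrix.toLin_mul bM bN bN _ F
    have h3 : Matrix.toLin bM bM (ptOf M bM i) = actL M (Module.finBasis k A i) := by
      rw [ptOf]; exact Matrix.toLin_toMatrix bM bM _
    have h4 : Matrix.toLin bN bN (ptOf N bN i) = actL N (Module.finBasis k A i) := by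
      rw [ptOf]; exact Matrix.toLin_toMatrix bN bN _
    rw [← h3, ← h4, ← h1, ← h2, hitw i]
  refine ⟨{ toFun := Matrix.toLin bM bN F,
            map_add' := (Matrix.toLin bM bN F).map_add, map_smul' := ?_ }, fun m => rfl⟩
  intro a m
  simp only [RingHom.id_apply]
  apply alinear_of_comm (Matrix.toLin bM bN F)
  intro i m'
  exact LinearMap.congr_fun (hcomm i) m'

lemma iso_of_itw {M N : FDMod k A} (bM : Basis (Fin d) k M.carrier)
    (bN : Basis (Fin d) k N.carrier) (F : MatS k d)
    (hitw : Itw (ptOf M bM) (ptOf N bN) F) (hdet : IsUnit F.det) : M.Iso N := by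
  obtain ⟨g, hg⟩ := hom_of_itw bM bN F hitw
  have hitw' : Itw (ptOf N bN) (ptOf M bM) F⁻¹ := by
    intro i
    have h := hitw i
    have h2 : F⁻¹ * (F * (ptOf M bM i * F⁻¹)) = ptOf M bM i * F⁻¹ := by
      rw [← Matrix.mul_assoc F⁻¹ F _, Matrix.nonsing_inv_mul _ hdet, Matrix.one_mul]
    rw [← h2, ← Matrix.mul_assoc F (ptOf M bM i) F⁻¹, h,
      Matrix.mul_assoc (ptOf N bN i) F F⁻¹, Matrix.mul_nonsing_inv _ hdet, Matrix.mul_one]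
  obtain ⟨g', hg'⟩ := hom_of_itw bN bM F⁻¹ hitw'
  refine ⟨LinearEquiv.ofLinear g g' ?_ ?_⟩
  · apply LinearMap.ext
    intro x
    show g (g' x) = x
    rw [hg, hg']
    have h5 : Matrix.toLin bM bN F (Matrix.toLin bN bM F⁻¹ x)
        = Matrix.toLin bN bN (F * F⁻¹) x := by
      rw [Matrix.toLin_mul bN bM bN]; rfl
    rw [h5, Matrix.mul_nonsing_inv _ hdet, Matrix.toLin_one]
    rfl
  · apply LinearMap.ext
    intro x
    show g' (g x) = x
    rw [hg, hg']
    have h5 : Matrix.toLin bN bM F⁻¹ (Matrix.toLin bM bN F x)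
        = Matrix.toLin bM bM (F⁻¹ * F) x := by
      rw [Matrix.toLin_mul bM bN bM]; rfl
    rw [h5, Matrix.nonsing_inv_mul _ hdet, Matrix.toLin_one]
    rfl

lemma solo_of_brick {M : FDMod k A} (bM : Basis (Fin d) k M.carrier) (hbrick : M.IsBrick) :
    ∀ F : MatS k d, Itw (ptOf M bM) (ptOf M bM) F → ∃ c : k, F = c • 1 := by
  intro F hitw
  obtain ⟨g, hg⟩ := hom_of_itw bM bM F hitw
  obtain ⟨c, hc⟩ := hbrick.2 g
  refine ⟨c, ?_⟩
  have hflin : Matrix.toLin bM bM F = c • (LinearMap.id : M.carrier →ₗ[k] M.carrier) := by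
    apply LinearMap.ext
    intro m
    rw [← hg m, hc m]
    rfl
  have h6 := congrArg (LinearMap.toMatrix bM bM) hflin
  rw [LinearMap.toMatrix_toLin] at h6
  rw [h6, _root_.map_smul, LinearMap.toMatrix_id]

lemma matrix_ne_zero_of_hom {M N : FDMod k A} (bM : Basis (Fin d) k M.carrier)
    (bN : Basis (Fin d) k N.carrier) (f : M.carrier →ₗ[A] N.carrier) (hf : f ≠ 0) :
    LinearMap.toMatrix bM bN (f.restrictScalars k) ≠ 0 := by
  intro h0
  apply hf
  have h1 := (LinearMap.toMatrix bM bN).map_eq_zero_iff.1 h0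
  apply LinearMap.ext
  intro m
  exact LinearMap.congr_fun h1 m

lemma iso_of_pt_eq {M N : FDMod k A} (bM : Basis (Fin d) k M.carrier)
    (bN : Basis (Fin d) k N.carrier) (h : ptOf M bM = ptOf N bN) : M.Iso N := by
  apply iso_of_itw bM bN (1 : MatS k d)
  · intro i
    rw [Matrix.one_mul, Matrix.mul_one, h]
  · rw [Matrix.det_one]
    exact isUnit_one

end Modules


section Main

variable {k A : Type u} [Field k] [Ring A] [Algebra k A] [FiniteDimensional k A]

lemma iso_symm {M N : FDMod k A} (h : M.Iso N) : N.Iso M := by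
  obtain ⟨e⟩ := h; exact ⟨e.symm⟩

lemma homOrth_symm {M N : FDMod k A} (h : M.HomOrth N) : N.HomOrth M := ⟨h.2, h.1⟩

theorem main_forward {d : ℕ} (hd : 0 < d) {I : Type u} (X : I → FDMod k A) [Infinite I]
    (hbr : ∀ i, (X i).IsBrick) (hni : ∀ i j, i ≠ j → ¬(X i).Iso (X j))
    (hdim : ∀ i, finrank k (X i).carrier = d) :
    ∃ g : ℕ → I, Function.Injective g ∧
      ∀ m m', m ≠ m' → (X (g m)).HomOrth (X (g m')) := by
  classical
  set n := finrank k A with hn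
  set bX : ∀ i : I, Basis (Fin d) k (X i).carrier :=
    fun i => Module.finBasisOfFinrankEq k (X i).carrier (hdim i) with hbX
  set ptX : I → Pt k n d := fun i => ptOf (X i) (bX i) with hptX
  have hptinj : Function.Injective ptX := by
    intro i j hij
    by_contra hne
    exact hni i j hne (iso_of_pt_eq (bX i) (bX j) hij)
  obtain ⟨Z, hZc, hZinf, hZmin⟩ := exists_minimal_polyClosed
    (fun s : Set (Pt k n d) => (s ∩ Set.range ptX).Infinite)
    ⟨Set.univ, polyClosed_univ, by
      show (Set.univ ∩ Set.range ptX).Infinite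
      rw [Set.univ_inter]
      exact Set.infinite_range_of_injective hptinj⟩
  -- the key "kill" argument
  have kill : ∀ j : I, ptX j ∈ Z → ∀ E : Set I, E.Infinite → (∀ i ∈ E, ptX i ∈ Z) →
      ∀ qB' PP' : PR k n d, evalA (ptX j) PP' ≠ 0 →
      (∀ i ∈ E, evalA (ptX i) qB' = 0) →
      (∀ i ∈ E, i ≠ j → (∀ x ∈ Z, evalA x qB' = 0) → evalA (ptX i) PP' ≠ 0 →
        (X i).Iso (X j)) →
      False := by
    intro j hjZ E hEinf hEZ qB' PP' hPne hEq hiso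
    have h1 : Z ∩ {x | evalA x qB' = 0} = Z := by
      apply hZmin _ (polyClosed_inter hZc (polyClosed_single qB')) ?_ Set.inter_subset_left
      have himg : ptX '' E ⊆ (Z ∩ {x | evalA x qB' = 0}) ∩ Set.range ptX := by
        rintro _ ⟨i, hi, rfl⟩
        exact ⟨⟨hEZ i hi, hEq i hi⟩, Set.mem_range_self i⟩
      exact (hEinf.image hptinj.injOn).mono himg
    have hZq : ∀ x ∈ Z, evalA x qB' = 0 := by
      intro x hx
      rw [← h1] at hx
      exact hx.2
    have h2 : ∀ i ∈ E, i ≠ j → evalA (ptX i) PP' = 0 := by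
      intro i hi hij
      by_contra hP2
      exact hni i j hij (hiso i hi hij hZq hP2)
    have h3 : Z ∩ {x | evalA x PP' = 0} = Z := by
      apply hZmin _ (polyClosed_inter hZc (polyClosed_single PP')) ?_ Set.inter_subset_left
      have himg : ptX '' (E \ {j}) ⊆ (Z ∩ {x | evalA x PP' = 0}) ∩ Set.range ptX := by
        rintro _ ⟨i, ⟨hi, hij⟩, rfl⟩
        exact ⟨⟨hEZ i hi, h2 i hi hij⟩, Set.mem_range_self i⟩
      exact ((hEinf.diff (Set.finite_singleton j)).image hptinj.injOn).mono himg
    apply hPne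
    have h4 : ptX j ∈ Z ∩ {x | evalA x PP' = 0} := by rw [h3]; exact hjZ
    exact h4.2
  -- the greedy step
  have step : ∀ s : Finset I, (∀ j ∈ s, ptX j ∈ Z) →
      ∃ i : I, ptX i ∈ Z ∧ i ∉ s ∧ ∀ j ∈ s, (X i).HomOrth (X j) := by
    intro s hs
    by_contra hno
    push_neg at hno
    -- cover
    set Efwd : I → Set I := fun j =>
      {i : I | ptX i ∈ Z ∧ ∃ f : (X j).carrier →ₗ[A] (X i).carrier, f ≠ 0} with hEfwd
    set Ebwd : I → Set I := fun j =>
      {i : I | ptX i ∈ Z ∧ ∃ f : (X i).carrier →ₗ[A] (X j).carrier, f ≠ 0} with hEbwd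
    have hcover : {i : I | ptX i ∈ Z} ⊆ ↑s ∪ ⋃ j ∈ s, (Efwd j ∪ Ebwd j) := by
      intro i hi
      by_cases his : i ∈ s
      · exact Or.inl his
      · obtain ⟨j, hjs, hjp⟩ := hno i hi his
        refine Or.inr (Set.mem_biUnion hjs ?_)
        rcases not_and_or.1 hjp with hmo | hmo
        · obtain ⟨f, hf⟩ := not_forall.1 hmo
          exact Or.inr ⟨hi, f, hf⟩
        · obtain ⟨f, hf⟩ := not_forall.1 hmo
          exact Or.inl ⟨hi, f, hf⟩
    have hZI : ({i : I | ptX i ∈ Z} : Set I).Infinite := by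
      apply Set.Infinite.of_image ptX
      apply Set.Infinite.mono _ hZinf
      rintro x ⟨hxZ, i, rfl⟩
      exact ⟨i, hxZ, rfl⟩
    have hEx : ∃ j ∈ s, (Efwd j).Infinite ∨ (Ebwd j).Infinite := by
      by_contra hfin
      push_neg at hfin
      apply hZI
      apply Set.Finite.subset _ hcover
      apply Set.Finite.union s.finite_toSet
      apply Set.Finite.biUnion s.finite_toSet
      intro j hj
      have := hfin j hj
      exact Set.Finite.union this.1 this.2
    obtain ⟨j, hjs, hj⟩ := hEx
    have hjZ : ptX j ∈ Z := hs j hjs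
    obtain ⟨qB, PP, hPne, hqB, hPP⟩ :=
      core_exists (ptX j) hd (solo_of_brick (bX j) (hbr j))
    rcases hj with hj | hj
    · -- forward case: nonzero maps X j → X i
      refine kill j hjZ (Efwd j) hj (fun i hi => hi.1) qB PP hPne ?_ ?_
      · rintro i ⟨hiZ, f, hf⟩
        exact hqB (ptX i) (LinearMap.toMatrix (bX j) (bX i) (f.restrictScalars k))
          (matrix_ne_zero_of_hom _ _ f hf) (itw_of_hom _ _ f)
      · rintro i ⟨hiZ, f, hf⟩ hij hZq hP2
        obtain ⟨F, hFitw, hFdet⟩ := hPP (ptX i) (hZq _ hiZ) hP2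
          ⟨LinearMap.toMatrix (bX j) (bX i) (f.restrictScalars k),
            matrix_ne_zero_of_hom _ _ f hf, itw_of_hom _ _ f⟩
        exact iso_symm (iso_of_itw (bX j) (bX i) F hFitw hFdet)
    · -- backward case: nonzero maps X i → X j ; use transposes
      obtain ⟨qBt, PPt, hPnet, hqBt, hPPt⟩ :=
        core_exists (fun t => (ptX j t)ᵀ) hd (solo_transpose (solo_of_brick (bX j) (hbr j)))
      refine kill j hjZ (Ebwd j) hj (fun i hi => hi.1)
        (MvPolynomial.rename swp qBt) (MvPolynomial.rename swp PPt) ?_ ?_ ?_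
      · rw [evalA_rename]
        exact hPnet
      · rintro i ⟨hiZ, f, hf⟩
        rw [evalA_rename]
        have hFt := itw_transpose (itw_of_hom (bX i) (bX j) f)
        apply hqBt (fun t => (ptX i t)ᵀ)
          (LinearMap.toMatrix (bX i) (bX j) (f.restrictScalars k))ᵀ
        · intro h0
          apply matrix_ne_zero_of_hom (bX i) (bX j) f hf
          have := congrArg Matrix.transpose h0
          rwa [Matrix.transpose_transpose, Matrix.transpose_zero] at this
        · exact hFt
      · rintro i ⟨hiZ, f, hf⟩ hij hZq hP2
        rw [evalA_rename] at hP2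
        have hq0 : evalA (fun t => (ptX i t)ᵀ) qBt = 0 := by
          rw [← evalA_rename]
          exact hZq _ hiZ
        have hFt := itw_transpose (itw_of_hom (bX i) (bX j) f)
        obtain ⟨G, hGitw, hGdet⟩ := hPPt (fun t => (ptX i t)ᵀ) hq0 hP2
          ⟨(LinearMap.toMatrix (bX i) (bX j) (f.restrictScalars k))ᵀ, by
            intro h0
            apply matrix_ne_zero_of_hom (bX i) (bX j) f hf
            have := congrArg Matrix.transpose h0
            rwa [Matrix.transpose_transpose, Matrix.transpose_zero] at this, hFt⟩
        have hGt := itw_transpose hGitw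
        simp only [Matrix.transpose_transpose] at hGt
        apply iso_of_itw (bX i) (bX j) Gᵀ hGt
        rwa [Matrix.det_transpose]
  -- greedy recursion
  choose stepf hstepf using step
  let F : ℕ → {s : Finset I // ∀ j ∈ s, ptX j ∈ Z} := fun m =>
    Nat.rec ⟨∅, by simp⟩
      (fun _ p => ⟨insert (stepf p.1 p.2) p.1, by
        intro j hj
        rcases Finset.mem_insert.1 hj with h | h
        · rw [h]; exact (hstepf p.1 p.2).1
        · exact p.2 j h⟩) m
  set g : ℕ → I := fun m => stepf (F m).1 (F m).2 with hg
  have hFsucc : ∀ m, (F (m + 1)).1 = insert (g m) (F m).1 := fun m => rfl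
  have hFmono : ∀ m m', m ≤ m' → (F m).1 ⊆ (F m').1 := by
    intro m m' hle
    induction m' with
    | zero => rw [Nat.le_zero.1 hle]
    | succ a ih =>
      rcases Nat.lt_or_ge m (a + 1) with hlt | hge
      · have h1 := Nat.lt_succ_iff.1 hlt
        refine subset_trans (ih h1) ?_
        rw [hFsucc]
        exact Finset.subset_insert _ _
      · rw [Nat.le_antisymm hle hge]
  have hmem : ∀ m m', m < m' → g m ∈ (F m').1 := by
    intro m m' hlt
    apply hFmono (m + 1) m' hlt
    rw [hFsucc]
    exact Finset.mem_insert_self _ _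
  have hkey : ∀ m m', m < m' → g m' ≠ g m ∧ (X (g m')).HomOrth (X (g m)) := by
    intro m m' hlt
    have h := hstepf (F m').1 (F m').2
    constructor
    · intro he
      apply h.2.1
      have h5 : g m' ∈ (F m').1 := by rw [he]; exact hmem m m' hlt
      exact h5
    · exact h.2.2 (g m) (hmem m m' hlt)
  refine ⟨g, ?_, ?_⟩
  · intro m m' he
    by_contra hne
    rcases Nat.lt_or_ge m m' with hlt | hge
    · exact (hkey m m' hlt).1 he.symm
    · exact (hkey m' m (lt_of_le_of_ne hge (Ne.symm hne))).1 he
  · intro m m' hne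
    rcases Nat.lt_or_ge m m' with hlt | hge
    · exact homOrth_symm (hkey m m' hlt).2
    · exact (hkey m' m (lt_of_le_of_ne hge (Ne.symm hne))).2

end Main

end

end Stmt7Aux

/-- For a positive integer `d`, the following are equivalent:
(1) there exist infinitely many pairwise non-isomorphic bricks of `k`-dimension `d`;
(2) there exists an infinite Hom-orthogonal set consisting of bricks of
`k`-dimension `d`. -/
theorem stmt7 {k A : Type u} [Field k] [IsAlgClosed k] [Ring A] [Algebra k A]
    [FiniteDimensional k A] (d : ℕ) (hd : 0 < d) :
    (∃ (I : Type u) (X : I → FDMod k A), Infinite I ∧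
        (∀ i, (X i).IsBrick) ∧ (∀ i j, i ≠ j → ¬(X i).Iso (X j)) ∧
        (∀ i, finrank k (X i).carrier = d)) ↔
    (∃ (I : Type u) (X : I → FDMod k A), Infinite I ∧
        HomOrthFamily X ∧ (∀ i, (X i).IsBrick) ∧
        (∀ i, finrank k (X i).carrier = d)) := by
  constructor
  · rintro ⟨I, X, hInf, hbr, hni, hdim⟩
    obtain ⟨g, hginj, hgorth⟩ := Stmt7Aux.main_forward hd X hbr hni hdim
    refine ⟨ULift ℕ, fun m => X (g m.down), inferInstance, ⟨?_, ?_, ?_⟩, ?_, ?_⟩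
    · intro i
      exact (hbr _).1
    · intro i j hne
      apply hni
      intro h
      exact hne (ULift.ext i j (hginj h))
    · intro i j hne
      apply hgorth
      intro h
      exact hne (ULift.ext i j h)
    · intro i
      exact hbr _
    · intro i
      exact hdim _
  · rintro ⟨I, X, hInf, hfam, hbr, hdim⟩
    exact ⟨I, X, hInf, hbr, hfam.2.1, hdim⟩
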